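/- arXiv:1707.07017 — 2 statements merged into one kernel-verified Lean document; each statement's English description precedes it below -/
import Mathlib

section
/- Let f : ℂ → ℂ be complex differentiable at every point of ℂ, let R be a rectangle, and let a lie in the interior of R. Then the contour integral of z ↦ f(z)/(z − a) over ∂R equals 2πi · f(a). -/
open Complex intervalIntegral Set

/-- The contour integral of `g` over the counter-clockwise boundary of the rectangle
`{z : α ≤ Re z ≤ β, γ ≤ Im z ≤ δ}`. -/
noncomputable def rectBoundaryIntegral (g : ℂ → ℂ) (α β γ δ : ℝ) : ℂ :=
  (∫ x : ℝ in α..β, g (x + γ * Complex.I)) - (∫ x : ℝ in α..β, g (x + δ * Complex.I)) +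
    Complex.I * (∫ y : ℝ in γ..δ, g (β + y * Complex.I)) -
    Complex.I * (∫ y : ℝ in γ..δ, g (α + y * Complex.I))

lemma log_neg_of_im_neg {w : ℂ} (hw : w.im < 0) :
    Complex.log (-w) = Complex.log w + Real.pi * I := by
  unfold Complex.log
  rw [norm_neg, arg_neg_eq_arg_add_pi_of_im_neg hw]
  push_cast; ring

lemma log_neg_of_im_pos {w : ℂ} (hw : 0 < w.im) :
    Complex.log (-w) = Complex.log w - Real.pi * I := by
  unfold Complex.log
  rw [norm_neg, arg_neg_eq_arg_sub_pi_of_im_pos hw]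
  push_cast; ring

lemma horiz_inv_integral (a : ℂ) (c α β : ℝ) (hc : c ≠ a.im) :
    ∫ x : ℝ in α..β, ((x : ℂ) + c * I - a)⁻¹ =
      Complex.log ((β : ℂ) + c * I - a) - Complex.log ((α : ℂ) + c * I - a) := by
  have h : ∀ x : ℝ, HasDerivAt (fun x : ℝ => Complex.log ((x : ℂ) + c * I - a))
      (((x : ℂ) + c * I - a)⁻¹) x := fun x => by
    have hz : (x : ℂ) + c * I - a ∈ Complex.slitPlane := by
      right; simp [sub_ne_zero, hc]
    have h1 : HasDerivAt (fun x : ℝ => (x : ℂ) + c * I - a) 1 x := by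
      simpa [add_sub_assoc] using (Complex.ofRealCLM.hasDerivAt (x := x)).add_const (c * I - a)
    simpa [Function.comp_def] using (Complex.hasDerivAt_log hz).comp x h1
  refine intervalIntegral.integral_eq_sub_of_hasDerivAt (fun x _ => h x) ?_
  apply ContinuousOn.intervalIntegrable
  refine ContinuousOn.inv₀ (by fun_prop) fun x _ => ?_
  rw [sub_ne_zero]
  intro hx; exact absurd (congrArg Complex.im hx) (by simpa using hc)

lemma vert_inv_integral_right (a : ℂ) (b γ δ : ℝ) (hb : a.re < b) :
    ∫ y : ℝ in γ..δ, I * ((b : ℂ) + y * I - a)⁻¹ =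
      Complex.log ((b : ℂ) + δ * I - a) - Complex.log ((b : ℂ) + γ * I - a) := by
  have h : ∀ y : ℝ, HasDerivAt (fun y : ℝ => Complex.log ((b : ℂ) + y * I - a))
      (I * ((b : ℂ) + y * I - a)⁻¹) y := fun y => by
    have hz : (b : ℂ) + y * I - a ∈ Complex.slitPlane := by
      left; simpa using sub_pos.2 hb
    have h1 : HasDerivAt (fun y : ℝ => (b : ℂ) + y * I - a) I y := by
      have := ((Complex.ofRealCLM.hasDerivAt (x := y)).mul_const I).const_add (b : ℂ)
      simpa [add_sub_assoc] using this.sub_const a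
    simpa [mul_comm, Function.comp_def] using (Complex.hasDerivAt_log hz).comp y h1
  refine intervalIntegral.integral_eq_sub_of_hasDerivAt (fun y _ => h y) ?_
  apply ContinuousOn.intervalIntegrable
  refine ContinuousOn.mul (by fun_prop) (ContinuousOn.inv₀ (by fun_prop) fun y _ => ?_)
  rw [sub_ne_zero]
  intro hy; exact absurd (congrArg Complex.re hy) (by simpa using hb.ne')

lemma vert_inv_integral_left (a : ℂ) (b γ δ : ℝ) (hb : b < a.re) :
    ∫ y : ℝ in γ..δ, I * ((b : ℂ) + y * I - a)⁻¹ =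
      Complex.log (-((b : ℂ) + δ * I - a)) - Complex.log (-((b : ℂ) + γ * I - a)) := by
  have h : ∀ y : ℝ, HasDerivAt (fun y : ℝ => Complex.log (-((b : ℂ) + y * I - a)))
      (I * ((b : ℂ) + y * I - a)⁻¹) y := fun y => by
    have hz : -((b : ℂ) + y * I - a) ∈ Complex.slitPlane := by
      left; simpa using sub_pos.2 hb
    have h1 : HasDerivAt (fun y : ℝ => -((b : ℂ) + y * I - a)) (-I) y := by
      have := ((Complex.ofRealCLM.hasDerivAt (x := y)).mul_const I).const_add (b : ℂ)
      have h0 := (this.sub_const a).neg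
      simp only [Complex.ofRealCLM_apply, ofReal_one, one_mul] at h0
      exact h0
    have h2 := (Complex.hasDerivAt_log hz).comp y h1
    have h3 : I * ((b : ℂ) + y * I - a)⁻¹ = (-((b : ℂ) + y * I - a))⁻¹ * (-I) := by
      rw [inv_neg]; ring
    rw [h3]; exact h2
  refine intervalIntegral.integral_eq_sub_of_hasDerivAt (fun y _ => h y) ?_
  apply ContinuousOn.intervalIntegrable
  refine ContinuousOn.mul (by fun_prop) (ContinuousOn.inv₀ (by fun_prop) fun y _ => ?_)
  rw [sub_ne_zero]
  intro hy; exact absurd (congrArg Complex.re hy) (by simpa using hb.ne)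

lemma rect_inv_integral (α β γ δ : ℝ) (a : ℂ) (h1 : α < a.re) (h2 : a.re < β)
    (h3 : γ < a.im) (h4 : a.im < δ) :
    rectBoundaryIntegral (fun z => (z - a)⁻¹) α β γ δ = 2 * Real.pi * I := by
  unfold rectBoundaryIntegral
  rw [horiz_inv_integral a γ α β h3.ne, horiz_inv_integral a δ α β h4.ne',
    ← intervalIntegral.integral_const_mul, ← intervalIntegral.integral_const_mul,
    vert_inv_integral_right a β γ δ h2, vert_inv_integral_left a α γ δ h1]
  have e1 : Complex.log (-((α : ℂ) + γ * I - a)) =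
      Complex.log ((α : ℂ) + γ * I - a) + Real.pi * I :=
    log_neg_of_im_neg (by simpa using sub_neg.2 h3)
  have e2 : Complex.log (-((α : ℂ) + δ * I - a)) =
      Complex.log ((α : ℂ) + δ * I - a) - Real.pi * I :=
    log_neg_of_im_pos (by simpa using sub_pos.2 h4)
  rw [e1, e2]; ring

lemma side_split (f : ℂ → ℂ) (a : ℂ) (hdsc : Continuous (dslope f a)) (p : ℝ → ℂ) (hp : ∀ t, p t ≠ a) (hpc : Continuous p) (s t : ℝ) :
    ∫ u : ℝ in s..t, f (p u) / (p u - a) =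
      (∫ u : ℝ in s..t, dslope f a (p u)) + f a * ∫ u : ℝ in s..t, (p u - a)⁻¹ := by
  have hA : Continuous fun u => dslope f a (p u) := hdsc.comp hpc
  have hB : Continuous fun u => f a * (p u - a)⁻¹ :=
    continuous_const.mul ((hpc.sub continuous_const).inv₀ fun u => sub_ne_zero.2 (hp u))
  rw [← intervalIntegral.integral_const_mul,
    ← intervalIntegral.integral_add (hA.intervalIntegrable s t) (hB.intervalIntegrable s t)]
  refine intervalIntegral.integral_congr fun u _ => ?_
  have hne : p u - a ≠ 0 := sub_ne_zero.2 (hp u)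
  rw [dslope_of_ne f (hp u), slope_def_field]
  field_simp
  ring

theorem cauchy_integral_formula_rect (f : ℂ → ℂ) (hf : ∀ z : ℂ, DifferentiableAt ℂ f z)
    (α β γ δ : ℝ) (hαβ : α < β) (hγδ : γ < δ) (a : ℂ)
    (ha : a.re ∈ Set.Ioo α β ∧ a.im ∈ Set.Ioo γ δ) :
    rectBoundaryIntegral (fun z => f z / (z - a)) α β γ δ =
      2 * Real.pi * Complex.I * f a := by
  obtain ⟨⟨h1, h2⟩, ⟨h3, h4⟩⟩ := ha
  -- dslope is continuous everywhere
  have hdsc : Continuous (dslope f a) := by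
    rw [continuous_iff_continuousAt]
    intro z
    rcases eq_or_ne z a with rfl | hz
    · exact continuousAt_dslope_same.2 (hf z)
    · exact ((differentiableAt_dslope_of_ne hz).2 (hf z)).continuousAt
  -- Cauchy-Goursat for dslope
  have key : rectBoundaryIntegral (dslope f a) α β γ δ = 0 := by
    have := Complex.integral_boundary_rect_eq_zero_of_differentiable_on_off_countable
      (dslope f a) ⟨α, γ⟩ ⟨β, δ⟩ {a} (Set.countable_singleton a)
      (hdsc.continuousOn)
      (fun x hx => (differentiableAt_dslope_of_ne hx.2).2 (hf x))
    simpa [rectBoundaryIntegral, smul_eq_mul] using this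
  -- point distinctions on the four sides
  have hpb : ∀ x : ℝ, (x : ℂ) + γ * I ≠ a := fun x h =>
    absurd (congrArg Complex.im h) (by simpa using h3.ne)
  have hpt : ∀ x : ℝ, (x : ℂ) + δ * I ≠ a := fun x h =>
    absurd (congrArg Complex.im h) (by simpa using h4.ne')
  have hpr : ∀ y : ℝ, (β : ℂ) + y * I ≠ a := fun y h =>
    absurd (congrArg Complex.re h) (by simpa using h2.ne')
  have hpl : ∀ y : ℝ, (α : ℂ) + y * I ≠ a := fun y h =>
    absurd (congrArg Complex.re h) (by simpa using h1.ne)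
  have sb := side_split f a hdsc (fun x : ℝ => (x : ℂ) + γ * I) hpb (by fun_prop) α β
  have st := side_split f a hdsc (fun x : ℝ => (x : ℂ) + δ * I) hpt (by fun_prop) α β
  have sr := side_split f a hdsc (fun y : ℝ => (β : ℂ) + y * I) hpr (by fun_prop) γ δ
  have sl := side_split f a hdsc (fun y : ℝ => (α : ℂ) + y * I) hpl (by fun_prop) γ δ
  have hinv := rect_inv_integral α β γ δ a h1 h2 h3 h4
  unfold rectBoundaryIntegral at key hinv ⊢
  rw [sb, st, sr, sl]
  have : (2 : ℂ) * Real.pi * I * f a = f a * (2 * Real.pi * I) := by ring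
  rw [this, ← hinv]
  linear_combination key + f a * hinv - f a * hinv
end

section
/- Let f : ℂ → ℂ be complex differentiable at every point of ℂ, let R be a rectangle, and let a lie in the interior of R. Then the contour integral of z ↦ f(z)/(z − a)² over ∂R equals 2πi · f'(a), where f' is the complex derivative of f. -/
open Complex intervalIntegral Set

-- entire functions have zero rectangle integral
lemma rect_zero (g : ℂ → ℂ) (hg : Differentiable ℂ g) (α β γ δ : ℝ) :
    rectBoundaryIntegral g α β γ δ = 0 := by
  have := Complex.integral_boundary_rect_eq_zero_of_differentiable_on_off_countable g
    (α + γ * Complex.I) (β + δ * Complex.I) ∅ Set.countable_empty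
    (hg.continuous.continuousOn) (fun x _ => hg x)
  simpa [rectBoundaryIntegral, smul_eq_mul] using this

lemma log_sub_log_neg {w : ℂ} (hw : 0 < w.im) :
    Complex.log w - Complex.log (-w) = Real.pi * Complex.I := by
  apply Complex.ext <;>
    simp [Complex.log_re, Complex.log_im, Complex.arg_neg_eq_arg_sub_pi_of_im_pos hw]

lemma log_neg_sub_log {w : ℂ} (hw : w.im < 0) :
    Complex.log (-w) - Complex.log w = Real.pi * Complex.I := by
  apply Complex.ext <;>
    simp [Complex.log_re, Complex.log_im, Complex.arg_neg_eq_arg_add_pi_of_im_neg hw]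

open Complex intervalIntegral Set

section helpers
variable {a : ℂ}

lemma horizFTC (G g : ℂ → ℂ) (α β γ : ℝ)
    (h : ∀ x : ℝ, HasDerivAt G (g (x + γ * Complex.I)) (x + γ * Complex.I))
    (hi : IntervalIntegrable (fun x : ℝ => g (x + γ * Complex.I)) MeasureTheory.volume α β) :
    (∫ x : ℝ in α..β, g (x + γ * Complex.I)) = G (β + γ * Complex.I) - G (α + γ * Complex.I) := by
  refine intervalIntegral.integral_eq_sub_of_hasDerivAt (f := fun x : ℝ => G (x + γ * Complex.I)) (fun x _ => ?_) hi
  have hc : HasDerivAt (fun x : ℝ => (x : ℂ) + γ * Complex.I) 1 x := by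
    simpa using (Complex.ofRealCLM.hasDerivAt.add_const ((γ : ℂ) * Complex.I))
  simpa [Function.comp_def] using HasDerivAt.scomp x (h x) hc

lemma vertFTC (G g : ℂ → ℂ) (β γ δ : ℝ)
    (h : ∀ y : ℝ, HasDerivAt G (g (β + y * Complex.I)) (β + y * Complex.I))
    (hi : IntervalIntegrable (fun y : ℝ => g (β + y * Complex.I)) MeasureTheory.volume γ δ) :
    Complex.I * (∫ y : ℝ in γ..δ, g (β + y * Complex.I)) =
      G (β + δ * Complex.I) - G (β + γ * Complex.I) := by
  rw [← intervalIntegral.integral_const_mul]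
  refine intervalIntegral.integral_eq_sub_of_hasDerivAt (f := fun y : ℝ => G (β + y * Complex.I)) (fun y _ => ?_) (hi.const_mul _)
  have hc : HasDerivAt (fun y : ℝ => (β : ℂ) + y * Complex.I) Complex.I y := by
    simpa using ((Complex.ofRealCLM.hasDerivAt.mul_const Complex.I).const_add (β : ℂ))
  have := HasDerivAt.scomp y (h y) hc
  simpa [mul_comm, Function.comp_def] using this
end helpers

lemma ne_a_of_im {a : ℂ} {γ : ℝ} (hγ : γ ≠ a.im) (x : ℝ) : (x : ℂ) + γ * Complex.I ≠ a := by
  intro h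
  apply hγ
  rw [← h]
  simp

lemma ne_a_of_re {a : ℂ} {β : ℝ} (hβ : β ≠ a.re) (y : ℝ) : (β : ℂ) + y * Complex.I ≠ a := by
  intro h
  apply hβ
  rw [← h]
  simp

lemma rect_inv_sq (a : ℂ) (α β γ δ : ℝ) (hα : α ≠ a.re) (hβ : β ≠ a.re)
    (hγ : γ ≠ a.im) (hδ : δ ≠ a.im) :
    rectBoundaryIntegral (fun z => ((z - a) ^ 2)⁻¹) α β γ δ = 0 := by
  set G : ℂ → ℂ := fun w => -(w - a)⁻¹ with hG
  have key : ∀ z : ℂ, z ≠ a → HasDerivAt G (((z - a) ^ 2)⁻¹) z := by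
    intro z hz
    have h1 : HasDerivAt (fun w : ℂ => w - a) 1 z := (hasDerivAt_id z).sub_const a
    have h2 := (h1.inv (sub_ne_zero.2 hz)).neg
    refine h2.congr_deriv ?_
    field_simp
  have contH : ∀ (γ' : ℝ), γ' ≠ a.im → Continuous fun x : ℝ => (((x : ℂ) + γ' * Complex.I - a) ^ 2)⁻¹ := by
    intro γ' h
    exact Continuous.inv₀ (((Complex.continuous_ofReal.add continuous_const).sub continuous_const).pow 2)
      fun x => pow_ne_zero 2 (sub_ne_zero.2 (ne_a_of_im h x))
  have contV : ∀ (β' : ℝ), β' ≠ a.re → Continuous fun y : ℝ => (((β' : ℂ) + y * Complex.I - a) ^ 2)⁻¹ := by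
    intro β' h
    exact Continuous.inv₀ (((continuous_const.add (Complex.continuous_ofReal.mul continuous_const)).sub continuous_const).pow 2)
      fun y => pow_ne_zero 2 (sub_ne_zero.2 (ne_a_of_re h y))
  have hbot := horizFTC G (fun z => ((z - a) ^ 2)⁻¹) α β γ (fun x => key _ (ne_a_of_im hγ x)) ((contH γ hγ).intervalIntegrable _ _)
  have htop := horizFTC G (fun z => ((z - a) ^ 2)⁻¹) α β δ (fun x => key _ (ne_a_of_im hδ x)) ((contH δ hδ).intervalIntegrable _ _)
  have hr := vertFTC G (fun z => ((z - a) ^ 2)⁻¹) β γ δ (fun y => key _ (ne_a_of_re hβ y)) ((contV β hβ).intervalIntegrable _ _)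
  have hl := vertFTC G (fun z => ((z - a) ^ 2)⁻¹) α γ δ (fun y => key _ (ne_a_of_re hα y)) ((contV α hα).intervalIntegrable _ _)
  rw [rectBoundaryIntegral, hbot, htop, hr, hl]
  ring

lemma rect_inv (a : ℂ) (α β γ δ : ℝ) (hα : α < a.re) (hβ : a.re < β)
    (hγ : γ < a.im) (hδ : a.im < δ) :
    rectBoundaryIntegral (fun z => (z - a)⁻¹) α β γ δ = 2 * Real.pi * Complex.I := by
  set G : ℂ → ℂ := fun w => Complex.log (w - a) with hGdef
  set M : ℂ → ℂ := fun w => Complex.log (a - w) with hMdef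
  have keyG : ∀ z : ℂ, z - a ∈ Complex.slitPlane → HasDerivAt G ((z - a)⁻¹) z := by
    intro z hz
    have h1 : HasDerivAt (fun w : ℂ => w - a) 1 z := (hasDerivAt_id z).sub_const a
    exact ((Complex.hasDerivAt_log hz).comp z h1).congr_deriv (mul_one _)
  have keyM : ∀ z : ℂ, a - z ∈ Complex.slitPlane → HasDerivAt M ((z - a)⁻¹) z := by
    intro z hz
    have h1 : HasDerivAt (fun w : ℂ => a - w) (-1) z := by
      simpa using (hasDerivAt_id z).const_sub a
    have := (Complex.hasDerivAt_log hz).comp z h1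
    refine this.congr_deriv ?_
    rw [← neg_sub a z, inv_neg]
    ring
  have memH : ∀ (γ' : ℝ), γ' ≠ a.im → ∀ x : ℝ,
      ((x : ℂ) + γ' * Complex.I - a) ∈ Complex.slitPlane := by
    intro γ' h x
    right
    simpa using sub_ne_zero.2 h
  have memR : ∀ y : ℝ, ((β : ℂ) + y * Complex.I - a) ∈ Complex.slitPlane := by
    intro y
    left
    simpa using sub_pos.2 hβ
  have memL : ∀ y : ℝ, (a - ((α : ℂ) + y * Complex.I)) ∈ Complex.slitPlane := by
    intro y
    left
    simpa using sub_pos.2 hα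
  have contH : ∀ (γ' : ℝ), γ' ≠ a.im → Continuous fun x : ℝ => ((x : ℂ) + γ' * Complex.I - a)⁻¹ := by
    intro γ' h
    exact Continuous.inv₀ ((Complex.continuous_ofReal.add continuous_const).sub continuous_const)
      fun x => sub_ne_zero.2 (ne_a_of_im h x)
  have contV : ∀ (β' : ℝ), β' ≠ a.re → Continuous fun y : ℝ => ((β' : ℂ) + y * Complex.I - a)⁻¹ := by
    intro β' h
    exact Continuous.inv₀ ((continuous_const.add (Complex.continuous_ofReal.mul continuous_const)).sub continuous_const)
      fun y => sub_ne_zero.2 (ne_a_of_re h y)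
  have hbot := horizFTC G (fun z => (z - a)⁻¹) α β γ (fun x => keyG _ (memH γ hγ.ne x))
    ((contH γ hγ.ne).intervalIntegrable _ _)
  have htop := horizFTC G (fun z => (z - a)⁻¹) α β δ (fun x => keyG _ (memH δ hδ.ne' x))
    ((contH δ hδ.ne').intervalIntegrable _ _)
  have hr := vertFTC G (fun z => (z - a)⁻¹) β γ δ (fun y => keyG _ (memR y))
    ((contV β hβ.ne').intervalIntegrable _ _)
  have hl := vertFTC M (fun z => (z - a)⁻¹) α γ δ (fun y => keyM _ (memL y))
    ((contV α hα.ne).intervalIntegrable _ _)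
  rw [rectBoundaryIntegral, hbot, htop, hr, hl]
  have hM1 : M ((α : ℂ) + δ * Complex.I) = Complex.log (-((α : ℂ) + δ * Complex.I - a)) := by
    rw [hMdef]; ring_nf
  have hM2 : M ((α : ℂ) + γ * Complex.I) = Complex.log (-((α : ℂ) + γ * Complex.I - a)) := by
    rw [hMdef]; ring_nf
  have h1 : G ((α : ℂ) + δ * Complex.I) - M ((α : ℂ) + δ * Complex.I) = Real.pi * Complex.I := by
    rw [hM1]
    exact log_sub_log_neg (by simpa using hδ)
  have h2 : M ((α : ℂ) + γ * Complex.I) - G ((α : ℂ) + γ * Complex.I) = Real.pi * Complex.I := by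
    rw [hM2]
    exact log_neg_sub_log (by simpa using hγ)
  have : G (↑β + ↑γ * Complex.I) - G (↑α + ↑γ * Complex.I) -
      (G (↑β + ↑δ * Complex.I) - G (↑α + ↑δ * Complex.I)) +
      (G (↑β + ↑δ * Complex.I) - G (↑β + ↑γ * Complex.I)) -
      (M (↑α + ↑δ * Complex.I) - M (↑α + ↑γ * Complex.I)) =
      (G ((α : ℂ) + δ * Complex.I) - M ((α : ℂ) + δ * Complex.I)) +
      (M ((α : ℂ) + γ * Complex.I) - G ((α : ℂ) + γ * Complex.I)) := by ring
  rw [this, h1, h2]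
  ring

lemma decomp (f : ℂ → ℂ) (a z : ℂ) (hz : z ≠ a) :
    f z / (z - a) ^ 2 =
      dslope (dslope f a) a z + deriv f a * (z - a)⁻¹ + f a * ((z - a) ^ 2)⁻¹ := by
  have hza : z - a ≠ 0 := sub_ne_zero.2 hz
  rw [dslope_of_ne _ hz, slope_def_field, dslope_of_ne _ hz, slope_def_field, dslope_same]
  field_simp
  ring

theorem cauchy_integral_formula_deriv_rect (f : ℂ → ℂ) (hf : ∀ z : ℂ, DifferentiableAt ℂ f z)
    (α β γ δ : ℝ) (hαβ : α < β) (hγδ : γ < δ) (a : ℂ)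
    (ha : a.re ∈ Set.Ioo α β ∧ a.im ∈ Set.Ioo γ δ) :
    rectBoundaryIntegral (fun z => f z / (z - a) ^ 2) α β γ δ =
      2 * Real.pi * Complex.I * deriv f a := by
  obtain ⟨⟨hα, hβ⟩, hγ, hδ⟩ := ha
  set h : ℂ → ℂ := dslope (dslope f a) a with hh
  have hf' : Differentiable ℂ f := fun z => hf z
  have hd1 : Differentiable ℂ (dslope f a) := by
    rw [← differentiableOn_univ]
    exact (Complex.differentiableOn_dslope Filter.univ_mem).2 hf'.differentiableOn
  have hd2 : Differentiable ℂ h := by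
    rw [hh, ← differentiableOn_univ]
    exact (Complex.differentiableOn_dslope Filter.univ_mem).2 hd1.differentiableOn
  -- side-wise decomposition
  have split : rectBoundaryIntegral (fun z => f z / (z - a) ^ 2) α β γ δ =
      rectBoundaryIntegral h α β γ δ +
        deriv f a * rectBoundaryIntegral (fun z => (z - a)⁻¹) α β γ δ +
        f a * rectBoundaryIntegral (fun z => ((z - a) ^ 2)⁻¹) α β γ δ := by
    have sideH : ∀ (γ' : ℝ), γ' ≠ a.im →
        (∫ x : ℝ in α..β, f (x + γ' * Complex.I) / ((x + γ' * Complex.I) - a) ^ 2) =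
          (∫ x : ℝ in α..β, h (x + γ' * Complex.I)) +
          deriv f a * (∫ x : ℝ in α..β, ((x + γ' * Complex.I) - a)⁻¹) +
          f a * (∫ x : ℝ in α..β, (((x + γ' * Complex.I) - a) ^ 2)⁻¹) := by
      intro γ' hne
      have e1 : (fun x : ℝ => f (x + γ' * Complex.I) / ((x + γ' * Complex.I) - a) ^ 2) =
          fun x : ℝ => h (x + γ' * Complex.I) +
            (deriv f a * ((x + γ' * Complex.I) - a)⁻¹ +
             f a * (((x + γ' * Complex.I) - a) ^ 2)⁻¹) := by
        funext x
        rw [decomp f a _ (ne_a_of_im hne x)]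
        ring
      have i1 : IntervalIntegrable (fun x : ℝ => h (x + γ' * Complex.I))
          MeasureTheory.volume α β :=
        (hd2.continuous.comp (Complex.continuous_ofReal.add continuous_const)).intervalIntegrable _ _
      have cinv : Continuous fun x : ℝ => ((x : ℂ) + γ' * Complex.I - a)⁻¹ :=
        Continuous.inv₀ ((Complex.continuous_ofReal.add continuous_const).sub continuous_const)
          fun x => sub_ne_zero.2 (ne_a_of_im hne x)
      have csq : Continuous fun x : ℝ => (((x : ℂ) + γ' * Complex.I - a) ^ 2)⁻¹ :=
        Continuous.inv₀ (((Complex.continuous_ofReal.add continuous_const).sub continuous_const).pow 2)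
          fun x => pow_ne_zero 2 (sub_ne_zero.2 (ne_a_of_im hne x))
      rw [e1, intervalIntegral.integral_add (g := fun x : ℝ => deriv f a * ((x : ℂ) + γ' * Complex.I - a)⁻¹ +
            f a * (((x : ℂ) + γ' * Complex.I - a) ^ 2)⁻¹) i1
          (((continuous_const.mul cinv).add (continuous_const.mul csq)).intervalIntegrable _ _),
        intervalIntegral.integral_add (f := fun x : ℝ => deriv f a * ((x : ℂ) + γ' * Complex.I - a)⁻¹)
          (g := fun x : ℝ => f a * (((x : ℂ) + γ' * Complex.I - a) ^ 2)⁻¹)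
          ((continuous_const.mul cinv).intervalIntegrable _ _)
          ((continuous_const.mul csq).intervalIntegrable _ _),
        intervalIntegral.integral_const_mul, intervalIntegral.integral_const_mul]
      ring
    have sideV : ∀ (β' : ℝ), β' ≠ a.re →
        (∫ y : ℝ in γ..δ, f (β' + y * Complex.I) / ((β' + y * Complex.I) - a) ^ 2) =
          (∫ y : ℝ in γ..δ, h (β' + y * Complex.I)) +
          deriv f a * (∫ y : ℝ in γ..δ, ((β' + y * Complex.I) - a)⁻¹) +
          f a * (∫ y : ℝ in γ..δ, (((β' + y * Complex.I) - a) ^ 2)⁻¹) := by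
      intro β' hne
      have e1 : (fun y : ℝ => f (β' + y * Complex.I) / ((β' + y * Complex.I) - a) ^ 2) =
          fun y : ℝ => h (β' + y * Complex.I) +
            (deriv f a * ((β' + y * Complex.I) - a)⁻¹ +
             f a * (((β' + y * Complex.I) - a) ^ 2)⁻¹) := by
        funext y
        rw [decomp f a _ (ne_a_of_re hne y)]
        ring
      have i1 : IntervalIntegrable (fun y : ℝ => h (β' + y * Complex.I))
          MeasureTheory.volume γ δ :=
        (hd2.continuous.comp (continuous_const.add
          (Complex.continuous_ofReal.mul continuous_const))).intervalIntegrable _ _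
      have cinv : Continuous fun y : ℝ => ((β' : ℂ) + y * Complex.I - a)⁻¹ :=
        Continuous.inv₀ ((continuous_const.add
            (Complex.continuous_ofReal.mul continuous_const)).sub continuous_const)
          fun y => sub_ne_zero.2 (ne_a_of_re hne y)
      have csq : Continuous fun y : ℝ => (((β' : ℂ) + y * Complex.I - a) ^ 2)⁻¹ :=
        Continuous.inv₀ (((continuous_const.add
            (Complex.continuous_ofReal.mul continuous_const)).sub continuous_const).pow 2)
          fun y => pow_ne_zero 2 (sub_ne_zero.2 (ne_a_of_re hne y))
      rw [e1, intervalIntegral.integral_add (g := fun y : ℝ => deriv f a * ((β' : ℂ) + y * Complex.I - a)⁻¹ +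
            f a * (((β' : ℂ) + y * Complex.I - a) ^ 2)⁻¹) i1
          (((continuous_const.mul cinv).add (continuous_const.mul csq)).intervalIntegrable _ _),
        intervalIntegral.integral_add (f := fun y : ℝ => deriv f a * ((β' : ℂ) + y * Complex.I - a)⁻¹)
          (g := fun y : ℝ => f a * (((β' : ℂ) + y * Complex.I - a) ^ 2)⁻¹)
          ((continuous_const.mul cinv).intervalIntegrable _ _)
          ((continuous_const.mul csq).intervalIntegrable _ _),
        intervalIntegral.integral_const_mul, intervalIntegral.integral_const_mul]
      ring
    rw [rectBoundaryIntegral, rectBoundaryIntegral, rectBoundaryIntegral, rectBoundaryIntegral,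
      sideH γ hγ.ne, sideH δ hδ.ne', sideV β hβ.ne', sideV α hα.ne]
    ring
  rw [split, rect_zero h hd2, rect_inv a α β γ δ hα hβ hγ hδ,
    rect_inv_sq a α β γ δ hα.ne hβ.ne' hγ.ne hδ.ne']
  ring
end
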